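/- For λ ∈ (0,∞) and complex s with 0 < Re(s) < 1/λ, the integral ∫₀^∞ (1+λt)^(−1/λ) t^(s−1) dt equals λ^(−s) B(s, 1/λ − s), where B is the Beta function. -/

import Mathlib

open MeasureTheory Set

/-- The degenerate gamma function `Γ_λ(s) = ∫₀^∞ (1+λt)^(−1/λ) t^(s−1) dt`. -/
noncomputable def degGamma (l : ℝ) (s : ℂ) : ℂ :=
  ∫ t in Ioi (0 : ℝ), (((1 + l * t) ^ (-(1 / l)) : ℝ) : ℂ) * (t : ℂ) ^ (s - 1)

theorem degGamma_eq_beta (l : ℝ) (hl : 0 < l) (s : ℂ)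
    (h0 : 0 < s.re) (h1 : s.re < 1 / l) :
    degGamma l s =
      (l : ℂ) ^ (-s) *
        (Complex.Gamma s * Complex.Gamma (1 / l - s) / Complex.Gamma (1 / l)) := by
  have hl0 : l ≠ 0 := hl.ne'
  have hlc : (l : ℂ) ≠ 0 := by exact_mod_cast hl0
  set φ : ℝ → ℝ := fun x => x / (l * (1 - x)) with hφ
  set g : ℝ → ℂ := fun t => (((1 + l * t) ^ (-(1 / l)) : ℝ) : ℂ) * (t : ℂ) ^ (s - 1) with hg
  have himg : φ '' Ioo 0 1 = Ioi 0 := by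
    ext t
    constructor
    · rintro ⟨x, ⟨hx0, hx1⟩, rfl⟩
      exact div_pos hx0 (mul_pos hl (by linarith))
    · intro ht
      have ht' : (0 : ℝ) < t := ht
      have hD : (0 : ℝ) < 1 + l * t := by positivity
      refine ⟨l * t / (1 + l * t), ⟨by positivity, ?_⟩, ?_⟩
      · rw [div_lt_one hD]; linarith [mul_pos hl ht']
      · simp only [hφ]
        have h5 : 1 - l * t / (1 + l * t) = 1 / (1 + l * t) := by field_simp; ring
        rw [h5]
        field_simp
  have hderiv : ∀ x ∈ Ioo (0:ℝ) 1, HasDerivWithinAt φ (1 / (l * (1 - x) ^ 2)) (Ioo 0 1) x := by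
    intro x hx
    have hb : (0 : ℝ) < 1 - x := by linarith [hx.2]
    have hden : HasDerivAt (fun x : ℝ => l * (1 - x)) (-l) x := by
      simpa using ((hasDerivAt_id x).const_sub 1).const_mul l
    have := (hasDerivAt_id x).div hden (by positivity)
    apply HasDerivAt.hasDerivWithinAt
    refine this.congr_deriv ?_
    rw [id_eq, div_eq_div_iff (pow_pos (mul_pos hl hb) 2).ne' (mul_pos hl (pow_pos hb 2)).ne']
    ring
  have hinj : InjOn φ (Ioo 0 1) := by
    intro a ha b hb h
    have ha' : (0:ℝ) < 1 - a := by linarith [ha.2]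
    have hb' : (0:ℝ) < 1 - b := by linarith [hb.2]
    simp only [hφ] at h
    rw [div_eq_div_iff (by positivity) (by positivity)] at h
    nlinarith [h]
  have key := integral_image_eq_integral_abs_deriv_smul measurableSet_Ioo hderiv hinj g
  have hv : (1 : ℂ) / l - s = ((1 / l : ℝ) : ℂ) - s := by push_cast; ring
  have hcongr : ∀ x ∈ Ioo (0:ℝ) 1,
      |1 / (l * (1 - x) ^ 2)| • g (φ x) =
        (l : ℂ) ^ (-s) * ((x : ℂ) ^ (s - 1) * (1 - (x : ℂ)) ^ ((1 / (l:ℂ) - s) - 1)) := by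
    intro x hx
    have hx0 : (0:ℝ) < x := hx.1
    have hb : (0 : ℝ) < 1 - x := by linarith [hx.2]
    have hbne : ((1 - x : ℝ) : ℂ) ≠ 0 := by exact_mod_cast hb.ne'
    have h1 : 1 + l * φ x = (1 - x)⁻¹ := by
      simp only [hφ]
      rw [mul_div_assoc', mul_div_mul_left x (1 - x) hl0]
      refine eq_inv_of_mul_eq_one_left ?_
      rw [add_mul, div_mul_cancel₀ _ hb.ne']
      ring
    have h2 : ((1 - x)⁻¹ : ℝ) ^ (-(1 / l)) = (1 - x) ^ (1 / l : ℝ) := by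
      rw [Real.inv_rpow hb.le, Real.rpow_neg hb.le, inv_inv]
    have hφr : φ x = x * (l * (1 - x))⁻¹ := by
      simp only [hφ, div_eq_mul_inv]
    have harg : ((l * (1 - x) : ℝ) : ℂ).arg ≠ Real.pi := by
      rw [Complex.arg_ofReal_of_nonneg (by positivity)]
      exact (Real.pi_ne_zero).symm
    have h3 : (φ x : ℂ) ^ (s - 1) =
        (x : ℂ) ^ (s - 1) * ((l : ℂ) ^ (-(s - 1)) * ((1 - x : ℝ) : ℂ) ^ (-(s - 1))) := by
      rw [hφr, Complex.ofReal_mul, Complex.mul_cpow_ofReal_nonneg hx0.le (by positivity),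
        Complex.ofReal_inv, Complex.inv_cpow _ _ harg, ← Complex.cpow_neg,
        Complex.ofReal_mul, Complex.mul_cpow_ofReal_nonneg hl.le hb.le]
    have habs : |1 / (l * (1 - x) ^ 2)| = 1 / (l * (1 - x) ^ 2) := by
      rw [abs_of_pos]; positivity
    simp only [hg, h1, h2, h3, habs, Complex.real_smul]
    rw [Complex.ofReal_cpow hb.le]
    have hx1c : (1 - (x:ℂ)) = ((1 - x : ℝ) : ℂ) := by push_cast; ring
    have he1 : (1 / (l:ℂ) - s) - 1 = (-1) + (-1 + (((1/l : ℝ):ℂ) + (-(s-1)))) := by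
      push_cast; ring
    have he2 : -s = -1 + (-(s - 1)) := by ring
    have hcc : ((1 / (l * (1 - x) ^ 2) : ℝ) : ℂ) =
        ((l : ℂ))⁻¹ * (((1 - x : ℝ) : ℂ))⁻¹ * (((1 - x : ℝ) : ℂ))⁻¹ := by
      rw [Complex.ofReal_div, Complex.ofReal_one, Complex.ofReal_mul, Complex.ofReal_pow,
        one_div, mul_inv, sq, mul_inv]
      ring
    rw [hx1c, he1, he2, Complex.cpow_add _ _ hbne, Complex.cpow_add _ _ hbne,
      Complex.cpow_add _ _ hbne, Complex.cpow_add _ _ hlc, Complex.cpow_neg_one,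
      Complex.cpow_neg_one, hcc]
    ring
  rw [degGamma, ← himg, key, setIntegral_congr_fun measurableSet_Ioo hcongr,
    integral_const_mul]
  have hbeta : Complex.betaIntegral s (1 / (l:ℂ) - s) =
      ∫ x in Ioo (0:ℝ) 1, (x : ℂ) ^ (s - 1) * (1 - (x : ℂ)) ^ ((1 / (l:ℂ) - s) - 1) := by
    rw [Complex.betaIntegral, intervalIntegral.integral_of_le zero_le_one,
      integral_Ioc_eq_integral_Ioo]
  rw [← hbeta]
  congr 1
  have hres : (0:ℝ) < (1 / (l:ℂ) - s).re := by
    rw [hv]; simpa using sub_pos.mpr h1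
  have hG := Complex.Gamma_mul_Gamma_eq_betaIntegral h0 hres
  have hsum : s + (1 / (l:ℂ) - s) = 1 / l := by ring
  rw [hsum] at hG
  have hlcr : (1 / (l:ℂ)) = ((1 / l : ℝ) : ℂ) := by push_cast; ring
  have hGne : Complex.Gamma (1 / (l:ℂ)) ≠ 0 := by
    apply Complex.Gamma_ne_zero_of_re_pos
    rw [hlcr, Complex.ofReal_re]
    positivity
  rw [hG, mul_div_cancel_left₀ _ hGne]
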